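/- Let n ≥ 1 and let C ∈ Matrix (Fin n) (Fin n) ℂ be cramped, i.e., 0 ∉ W(C). Then there exists θ ∈ ℝ such that for every x ∈ EuclideanSpace ℂ (Fin n) with ‖x‖ = 1 one has Re(Complex.exp(−θ * Complex.I) * (star x ⬝ᵥ C.mulVec x)) > 0; that is, the numerical range of a cramped matrix is contained in an open half-plane whose boundary passes through the origin. -/

import Mathlib

open Matrix Complex
set_option maxHeartbeats 1000000

variable {n : ℕ}

noncomputable def q (D : Matrix (Fin n) (Fin n) ℂ) (x : EuclideanSpace ℂ (Fin n)) : ℂ :=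
  star x ⬝ᵥ D.mulVec x

lemma q_cont (D : Matrix (Fin n) (Fin n) ℂ) : Continuous (q D) := by
  have h1 : Continuous fun x : Fin n → ℂ => star x ⬝ᵥ D.mulVec x :=
    (continuous_star.comp continuous_id).dotProduct
      (continuous_const.matrix_mulVec continuous_id)
  exact h1.comp (PiLp.continuous_ofLp ..)

lemma pi_expand (D : Matrix (Fin n) (Fin n) ℂ) (u v : Fin n → ℂ) (a b : ℂ) :
    star (a • u + b • v) ⬝ᵥ D.mulVec (a • u + b • v)
      = (starRingEnd ℂ) a * a * (star u ⬝ᵥ D.mulVec u)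
        + (starRingEnd ℂ) b * b * (star v ⬝ᵥ D.mulVec v)
        + (starRingEnd ℂ) a * b * (star u ⬝ᵥ D.mulVec v)
        + (starRingEnd ℂ) b * a * (star v ⬝ᵥ D.mulVec u) := by
  simp only [star_add, star_smul, Matrix.mulVec_add, Matrix.mulVec_smul, add_dotProduct,
    dotProduct_add, smul_dotProduct, dotProduct_smul, smul_eq_mul, RCLike.star_def]
  ring

lemma q_expand (D : Matrix (Fin n) (Fin n) ℂ) (u v : EuclideanSpace ℂ (Fin n)) (a b : ℂ) :
    q D (a • u + b • v)
      = (starRingEnd ℂ) a * a * q D u + (starRingEnd ℂ) b * b * q D v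
        + (starRingEnd ℂ) a * b * (star u ⬝ᵥ D.mulVec v)
        + (starRingEnd ℂ) b * a * (star v ⬝ᵥ D.mulVec u) :=
  pi_expand D u v a b

lemma q_smul (D : Matrix (Fin n) (Fin n) ℂ) (c : ℂ) (x : EuclideanSpace ℂ (Fin n)) :
    q D (c • x) = (starRingEnd ℂ) c * c * q D x := by
  have := q_expand D x x c 0
  simp only [zero_smul, add_zero, map_zero, zero_mul, mul_zero] at this
  linear_combination this

lemma pi_cross1 (D : Matrix (Fin n) (Fin n) ℂ) (u v : Fin n → ℂ) (c : ℂ) :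
    star (c • u) ⬝ᵥ D.mulVec v = (starRingEnd ℂ) c * (star u ⬝ᵥ D.mulVec v) := by
  simp [star_smul, smul_dotProduct, smul_eq_mul, RCLike.star_def]

lemma pi_cross2 (D : Matrix (Fin n) (Fin n) ℂ) (u v : Fin n → ℂ) (c : ℂ) :
    star u ⬝ᵥ D.mulVec (c • v) = c * (star u ⬝ᵥ D.mulVec v) := by
  simp [Matrix.mulVec_smul, dotProduct_smul, smul_eq_mul]

noncomputable def pp (u y : EuclideanSpace ℂ (Fin n)) (s : ℝ) : EuclideanSpace ℂ (Fin n) :=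
  (((1 - s : ℝ)) : ℂ) • u + ((s : ℝ) : ℂ) • y

noncomputable def ww (u y : EuclideanSpace ℂ (Fin n)) (s : ℝ) : EuclideanSpace ℂ (Fin n) :=
  ((‖pp u y s‖⁻¹ : ℝ) : ℂ) • pp u y s

lemma key (D : Matrix (Fin n) (Fin n) ℂ) (x y : EuclideanSpace ℂ (Fin n))
    (hx : ‖x‖ = 1) (hy : ‖y‖ = 1) (hqx : q D x = 0) (hqy : q D y = 1)
    {t : ℝ} (ht : t ∈ Set.Icc (0:ℝ) 1) :
    ∃ w : EuclideanSpace ℂ (Fin n), ‖w‖ = 1 ∧ q D w = (t : ℂ) := by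
  set A := star x ⬝ᵥ D.mulVec y with hA
  set B := star y ⬝ᵥ D.mulVec x with hB
  -- choose phase φ
  set g : ℝ → ℝ := fun φ => (Complex.exp (-(φ:ℂ) * I) * A + Complex.exp ((φ:ℂ) * I) * B).im
    with hg
  have hc1 : Continuous fun φ : ℝ => -(φ:ℂ) * I :=
    (Complex.continuous_ofReal.neg).mul continuous_const
  have hc2 : Continuous fun φ : ℝ => (φ:ℂ) * I :=
    Complex.continuous_ofReal.mul continuous_const
  have hgc : Continuous g := by
    apply Complex.continuous_im.comp
    exact ((Complex.continuous_exp.comp hc1).mul continuous_const).add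
      ((Complex.continuous_exp.comp hc2).mul continuous_const)
  have hgpi : g Real.pi = - g 0 := by
    simp [hg, Complex.exp_pi_mul_I, neg_mul, Complex.exp_neg]
    ring
  have hex : ∃ φ : ℝ, g φ = 0 := by
    rcases le_total (g 0) 0 with h | h
    · have h0 : (0:ℝ) ∈ Set.Icc (g 0) (g Real.pi) := ⟨h, by rw [hgpi]; linarith⟩
      obtain ⟨φ, _, hφ⟩ := intermediate_value_Icc Real.pi_pos.le hgc.continuousOn h0
      exact ⟨φ, hφ⟩
    · have h0 : (0:ℝ) ∈ Set.Icc (g Real.pi) (g 0) := ⟨by rw [hgpi]; linarith, h⟩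
      obtain ⟨φ, _, hφ⟩ := intermediate_value_Icc' Real.pi_pos.le hgc.continuousOn h0
      exact ⟨φ, hφ⟩
  obtain ⟨φ, hφ⟩ := hex
  set c : ℂ := Complex.exp ((φ:ℂ) * I) with hc
  have hconj : (starRingEnd ℂ) c = Complex.exp (-(φ:ℂ) * I) := by
    rw [hc, ← Complex.exp_conj]
    congr 1
    simp [Complex.conj_I, Complex.conj_ofReal]
  have hcc : (starRingEnd ℂ) c * c = 1 := by
    rw [hconj, hc, ← Complex.exp_add]
    simp
  have hexu : ∃ u : EuclideanSpace ℂ (Fin n), ‖u‖ = 1 ∧ q D u = 0 ∧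
      (star u ⬝ᵥ D.mulVec y + star y ⬝ᵥ D.mulVec u).im = 0 := by
    refine ⟨c • x, ?_, ?_, ?_⟩
    · rw [norm_smul, hx, mul_one]
      exact Complex.norm_exp_ofReal_mul_I φ
    · rw [q_smul, hcc, one_mul, hqx]
    · rw [WithLp.ofLp_smul, pi_cross1 D x y c, pi_cross2 D y x c, hconj]
      exact hφ
  obtain ⟨u, hun, hqu, hKim0⟩ := hexu
  set K := star u ⬝ᵥ D.mulVec y + star y ⬝ᵥ D.mulVec u with hK
  have hKim : K.im = 0 := hKim0
  -- the path
  have hF : ∀ s : ℝ, q D (pp u y s) = ((s^2 : ℝ) : ℂ) + (((1-s)*s : ℝ) : ℂ) * K := by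
    intro s
    rw [pp, q_expand, hqu, hqy, Complex.conj_ofReal, Complex.conj_ofReal, hK]
    push_cast
    ring
  have hFim : ∀ s : ℝ, (q D (pp u y s)).im = 0 := by
    intro s
    rw [hF s]
    simp [← Complex.ofReal_pow, Complex.im_ofReal_mul, Complex.ofReal_im, hKim]
  have hpne : ∀ s : ℝ, pp u y s ≠ 0 := by
    intro s h0
    have h1 : (((1 - s : ℝ)) : ℂ) • u = (-(s:ℝ) : ℂ) • y := by
      rw [neg_smul]
      rw [pp] at h0
      linear_combination (norm := module) h0
    have h2 : q D ((((1 - s : ℝ)) : ℂ) • u) = q D ((-(s:ℝ) : ℂ) • y) := by rw [h1]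
    rw [q_smul, q_smul, hqu, hqy, Complex.conj_ofReal, mul_zero, mul_one] at h2
    have hs0 : (s : ℂ) = 0 := by
      have h3 : ((s:ℂ)) * s = 0 := by
        rw [← Complex.ofReal_neg, Complex.conj_ofReal] at h2
        push_cast at h2 ⊢
        linear_combination -h2
      rcases mul_eq_zero.mp h3 with h | h <;> exact h
    have hs0' : s = 0 := by exact_mod_cast hs0
    rw [hs0'] at h0
    rw [pp] at h0
    simp at h0
    rw [h0] at hun
    simp at hun
  have hppos : ∀ s : ℝ, 0 < ‖pp u y s‖ := fun s => norm_pos_iff.mpr (hpne s)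
  have hwn : ∀ s : ℝ, ‖ww u y s‖ = 1 := by
    intro s
    rw [ww, norm_smul]
    simp [Complex.norm_real, _root_.abs_of_nonneg (inv_nonneg.mpr (norm_nonneg _)),
      inv_mul_cancel₀ (hppos s).ne']
  have hqw : ∀ s : ℝ, q D (ww u y s) = (((‖pp u y s‖⁻¹)^2 : ℝ) : ℂ) * q D (pp u y s) := by
    intro s
    rw [ww, q_smul, Complex.conj_ofReal]
    push_cast
    ring
  -- continuity of the path
  have hpc : Continuous (pp u y) := by
    apply Continuous.add
    · exact (Complex.continuous_ofReal.comp (continuous_const.sub continuous_id)).smul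
        continuous_const
    · exact (Complex.continuous_ofReal.comp continuous_id).smul continuous_const
  have hwc : Continuous (ww u y) := by
    refine Continuous.smul (f := fun s => ((‖pp u y s‖⁻¹ : ℝ) : ℂ)) (g := pp u y) ?_ ?_
    · exact Complex.continuous_ofReal.comp ((hpc.norm.inv₀) (fun s => (hppos s).ne'))
    · exact hpc
  set G : ℝ → ℝ := fun s => (q D (ww u y s)).re with hG
  have hGc : Continuous G := Complex.continuous_re.comp ((q_cont D).comp hwc)
  have hp0 : pp u y 0 = u := by rw [pp]; push_cast; simp
  have hp1 : pp u y 1 = y := by rw [pp]; push_cast; simp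
  have hG0 : G 0 = 0 := by
    show (q D (ww u y 0)).re = 0
    rw [hqw 0, hp0, hqu]
    simp
  have hG1 : G 1 = 1 := by
    show (q D (ww u y 1)).re = 1
    rw [hqw 1, hp1, hqy, hy]
    norm_num
  have hmem : t ∈ Set.Icc (G 0) (G 1) := by rw [hG0, hG1]; exact ht
  obtain ⟨s, _, hGs⟩ := intermediate_value_Icc (zero_le_one) hGc.continuousOn hmem
  refine ⟨ww u y s, hwn s, ?_⟩
  have him : (q D (ww u y s)).im = 0 := by
    rw [hqw s, Complex.im_ofReal_mul, hFim s, mul_zero]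
  apply Complex.ext
  · rw [← hGs]; rfl
  · simp [him]

/-- The numerical range of a complex square matrix. -/
def numericalRange {n : ℕ} (C : Matrix (Fin n) (Fin n) ℂ) : Set ℂ :=
  {z : ℂ | ∃ x : EuclideanSpace ℂ (Fin n), ‖x‖ = 1 ∧ z = star x ⬝ᵥ C.mulVec x}

lemma pi_affine (C : Matrix (Fin n) (Fin n) ℂ) (a b : ℂ) (v : Fin n → ℂ) :
    star v ⬝ᵥ (a • C - b • (1 : Matrix (Fin n) (Fin n) ℂ)).mulVec v
      = a * (star v ⬝ᵥ C.mulVec v) - b * (star v ⬝ᵥ v) := by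
  simp [Matrix.sub_mulVec, Matrix.smul_mulVec, Matrix.one_mulVec, dotProduct_sub,
    dotProduct_smul, smul_eq_mul]

lemma star_dot_self (v : EuclideanSpace ℂ (Fin n)) (hv : ‖v‖ = 1) :
    star (v : Fin n → ℂ) ⬝ᵥ (v : Fin n → ℂ) = 1 := by
  have h1 : (inner ℂ v v : ℂ) = star (v : Fin n → ℂ) ⬝ᵥ (v : Fin n → ℂ) := by
    simp [-inner_self_eq_norm_sq_to_K, PiLp.inner_apply, RCLike.inner_apply, dotProduct]
    exact Finset.sum_congr rfl fun _ _ => mul_comm _ _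
  have h2 : (inner ℂ v v : ℂ) = ((‖v‖:ℂ))^2 := inner_self_eq_norm_sq_to_K v
  rw [← h1, h2, hv]
  norm_num

lemma q_affine (C : Matrix (Fin n) (Fin n) ℂ) (a b : ℂ) (v : EuclideanSpace ℂ (Fin n))
    (hv : ‖v‖ = 1) :
    q (a • C - b • (1 : Matrix (Fin n) (Fin n) ℂ)) v = a * q C v - b := by
  have h := pi_affine C a b v
  rw [star_dot_self v hv, mul_one] at h
  exact h

theorem convexW (C : Matrix (Fin n) (Fin n) ℂ) : Convex ℝ (numericalRange C) := by
  rintro w1 hw1 w2 hw2 a b ha hb hab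
  obtain ⟨x, hx, rfl⟩ := hw1
  obtain ⟨y, hy, rfl⟩ := hw2
  set z1 : ℂ := star x ⬝ᵥ C.mulVec x with hz1
  set z2 : ℂ := star y ⬝ᵥ C.mulVec y with hz2
  have habC : (a : ℂ) + (b : ℂ) = 1 := by exact_mod_cast congrArg (Complex.ofReal) hab
  by_cases hzz : z1 = z2
  · refine ⟨x, hx, ?_⟩
    rw [Complex.real_smul, Complex.real_smul, ← hz1, ← hzz]
    linear_combination z1 * habC
  · set d : ℂ := z2 - z1 with hd
    have hdne : d ≠ 0 := sub_ne_zero.mpr (Ne.symm hzz)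
    set D := d⁻¹ • C - (z1 * d⁻¹) • (1 : Matrix (Fin n) (Fin n) ℂ) with hD
    have hqDx : q D x = 0 := by
      rw [hD, q_affine C _ _ x hx]
      show d⁻¹ * z1 - z1 * d⁻¹ = 0
      ring
    have hqDy : q D y = 1 := by
      rw [hD, q_affine C _ _ y hy]
      show d⁻¹ * z2 - z1 * d⁻¹ = 1
      field_simp [hd]
      exact hd.symm
    have hbIcc : b ∈ Set.Icc (0:ℝ) 1 := ⟨hb, by linarith⟩
    obtain ⟨w, hwn, hwq⟩ := key D x y hx hy hqDx hqDy hbIcc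
    refine ⟨w, hwn, ?_⟩
    rw [hD, q_affine C _ _ w hwn] at hwq
    have hqcw : q C w = z1 + (b : ℂ) * d := by
      field_simp at hwq
      linear_combination hwq
    show (a : ℝ) • z1 + (b : ℝ) • z2 = q C w
    rw [Complex.real_smul, Complex.real_smul, hqcw, hd]
    linear_combination z1 * habC

/-- The numerical range of a cramped matrix is contained in an open half-plane
whose boundary passes through the origin. -/
theorem cramped_numericalRange_subset_open_halfplane {n : ℕ} (hn : 1 ≤ n)
    (C : Matrix (Fin n) (Fin n) ℂ) (hC : (0 : ℂ) ∉ numericalRange C) :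
    ∃ θ : ℝ, ∀ x : EuclideanSpace ℂ (Fin n), ‖x‖ = 1 →
      0 < (Complex.exp (-θ * Complex.I) * (star x ⬝ᵥ C.mulVec x)).re := by
  have hconv : Convex ℝ (numericalRange C) := convexW C
  have himg : numericalRange C = q C '' Metric.sphere (0 : EuclideanSpace ℂ (Fin n)) 1 := by
    ext z
    constructor
    · rintro ⟨x, hx, rfl⟩
      exact ⟨x, mem_sphere_zero_iff_norm.mpr hx, rfl⟩
    · rintro ⟨x, hx, rfl⟩
      exact ⟨x, mem_sphere_zero_iff_norm.mp hx, rfl⟩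
  have hcompact : IsCompact (numericalRange C) := by
    rw [himg]
    exact (isCompact_sphere 0 1).image (q_cont C)
  obtain ⟨f, ucut, hf0, hfW⟩ :=
    geometric_hahn_banach_point_closed hconv hcompact.isClosed hC
  rw [map_zero] at hf0
  -- nonemptiness
  have hx0 : ‖(EuclideanSpace.single (⟨0, hn⟩ : Fin n) (1:ℂ) : EuclideanSpace ℂ (Fin n))‖ = 1 := by
    rw [EuclideanSpace.norm_single]; norm_num
  have hz0 : q C (EuclideanSpace.single (⟨0, hn⟩ : Fin n) (1:ℂ)) ∈ numericalRange C :=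
    ⟨_, hx0, rfl⟩
  -- the functional as a complex number
  set w : ℂ := ⟨f 1, f Complex.I⟩ with hw
  have hfrepr : ∀ z : ℂ, f z = ((starRingEnd ℂ) w * z).re := by
    intro z
    have hz : z = z.re • (1:ℂ) + z.im • Complex.I := by
      simp [Complex.real_smul, Complex.re_add_im]
    calc f z = f (z.re • (1:ℂ) + z.im • Complex.I) := by rw [← hz]
      _ = z.re * f 1 + z.im * f Complex.I := by
          rw [map_add, f.map_smul, f.map_smul]; simp [smul_eq_mul]
      _ = ((starRingEnd ℂ) w * z).re := by
          simp [hw, Complex.mul_re, Complex.conj_re, Complex.conj_im]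
          ring
  have hwne : w ≠ 0 := by
    intro h0
    have := hfW _ hz0
    rw [hfrepr, h0] at this
    simp at this
    linarith
  refine ⟨Complex.arg w, ?_⟩
  intro x hx
  have hmem : q C x ∈ numericalRange C := ⟨x, hx, rfl⟩
  have hlt : ucut < f (q C x) := hfW _ hmem
  have habs : (0:ℝ) < ‖w‖ := norm_pos_iff.mpr hwne
  have hconjw : (starRingEnd ℂ) w = (‖w‖ : ℂ) * Complex.exp (-(w.arg : ℂ) * Complex.I) := by
    conv_lhs => rw [← Complex.norm_mul_exp_arg_mul_I w]
    rw [_root_.map_mul, Complex.conj_ofReal, ← Complex.exp_conj]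
    congr 2
    simp [Complex.conj_I, Complex.conj_ofReal]
  have hkey : f (q C x) = ‖w‖ * (Complex.exp (-(w.arg : ℂ) * Complex.I) * q C x).re := by
    rw [hfrepr, hconjw, mul_assoc, Complex.re_ofReal_mul]
  have hpos : 0 < ‖w‖ * (Complex.exp (-(w.arg : ℂ) * Complex.I) * q C x).re := by
    rw [← hkey]; linarith
  show 0 < (Complex.exp (-(w.arg:ℂ) * Complex.I) * q C x).re
  by_contra hcon
  push_neg at hcon
  nlinarith [hpos, habs]
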